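/- If F ∈ ℂ^{A_•} factors as F = G ∘ Φ_B for a monomial map Φ_B with |det B| = m, then the number of solutions of F = 0 in (ℂ*)^n equals m times the number of solutions of G = 0 in (ℂ*)^n, provided all solutions are counted without multiplicity and G has finitely many solutions in the torus. -/

import Mathlib

/-- The monomial map on the torus `(ℂ*)^n` associated to an integer matrix `B`. -/
def monomialMap {n : ℕ} (B : Matrix (Fin n) (Fin n) ℤ) (x : Fin n → ℂˣ) : Fin n → ℂˣ :=
  fun i => ∏ j, (x j) ^ (B i j)

lemma zpow_sum'' {G : Type*} [CommGroup G] (x : G) {α : Type*} (s : Finset α) (f : α → ℤ) :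
    x ^ (∑ a ∈ s, f a) = ∏ a ∈ s, x ^ f a := by
  classical
  induction s using Finset.induction with
  | empty => simp
  | @insert a s h ih => rw [Finset.sum_insert h, Finset.prod_insert h, zpow_add, ih]

lemma monomialMap_mul {n : ℕ} (A B : Matrix (Fin n) (Fin n) ℤ) (x : Fin n → ℂˣ) :
    monomialMap (A * B) x = monomialMap A (monomialMap B x) := by
  funext i
  simp only [monomialMap, Matrix.mul_apply]
  have : ∀ k, x k ^ (∑ j, A i j * B j k) = ∏ j, (x k ^ B j k) ^ A i j := by
    intro k
    rw [zpow_sum'']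
    exact Finset.prod_congr rfl fun j _ => by rw [← zpow_mul, mul_comm]
  simp only [this]
  rw [Finset.prod_comm]
  exact Finset.prod_congr rfl fun j _ => by rw [Finset.prod_zpow]

lemma monomialMap_one {n : ℕ} (x : Fin n → ℂˣ) :
    monomialMap (1 : Matrix (Fin n) (Fin n) ℤ) x = x := by
  funext i
  simp only [monomialMap, Matrix.one_apply]
  rw [Finset.prod_eq_single i] <;> simp +contextual [eq_comm]

lemma monomialMap_mapmul {n : ℕ} (B : Matrix (Fin n) (Fin n) ℤ) (x y : Fin n → ℂˣ) :
    monomialMap B (x * y) = monomialMap B x * monomialMap B y := by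
  funext i
  simp [monomialMap, mul_zpow, Finset.prod_mul_distrib]

lemma monomialMap_diagonal {n : ℕ} (a : Fin n → ℤ) (x : Fin n → ℂˣ) (i : Fin n) :
    monomialMap (Matrix.diagonal a) x i = x i ^ a i := by
  simp only [monomialMap]
  rw [Finset.prod_eq_single i]
  · rw [Matrix.diagonal_apply_eq]
  · intro j _ hj
    rw [Matrix.diagonal_apply_ne _ (Ne.symm hj), zpow_zero]
  · simp

lemma zpow_surj_units (m : ℤ) (hm : m ≠ 0) : Function.Surjective (fun z : ℂˣ => z ^ m) := by
  intro y
  obtain ⟨x, hx⟩ := IsAlgClosed.exists_pow_nat_eq (y : ℂ) (n := m.natAbs)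
    (Nat.pos_of_ne_zero (Int.natAbs_ne_zero.mpr hm))
  have hx0 : x ≠ 0 := by
    intro h; rw [h, zero_pow (Int.natAbs_ne_zero.mpr hm)] at hx
    exact y.ne_zero hx.symm
  have hu : (Units.mk0 x hx0) ^ m.natAbs = y := by
    ext; push_cast [Units.val_pow_eq_pow_val]; exact hx
  rcases Int.natAbs_eq m with h | h
  · refine ⟨Units.mk0 x hx0, ?_⟩
    show Units.mk0 x hx0 ^ m = y
    rw [h, zpow_natCast, hu]
  · refine ⟨(Units.mk0 x hx0)⁻¹, ?_⟩
    show (Units.mk0 x hx0)⁻¹ ^ m = y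
    rw [h, zpow_neg, zpow_natCast, inv_pow, inv_inv, hu]

lemma zpow_eq_one_iff_natAbs (m : ℤ) (z : ℂˣ) : z ^ m = 1 ↔ z ^ m.natAbs = 1 := by
  rcases Int.natAbs_eq m with h | h
  · nth_rewrite 1 [h]; rw [zpow_natCast]
  · nth_rewrite 1 [h]
    rw [zpow_neg, zpow_natCast, inv_eq_one]

lemma card_zpow_ker (m : ℤ) (hm : m ≠ 0) :
    Nat.card {z : ℂˣ // z ^ m = 1} = m.natAbs := by
  haveI : NeZero m.natAbs := ⟨Int.natAbs_ne_zero.mpr hm⟩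
  have hiff : ∀ z : ℂˣ, z ^ m = 1 ↔ z ∈ rootsOfUnity m.natAbs ℂ := by
    intro z
    rw [mem_rootsOfUnity, zpow_eq_one_iff_natAbs]
  rw [Nat.card_congr (Equiv.subtypeEquivRight hiff)]
  exact (Complex.isPrimitiveRoot_exp _ (NeZero.ne _)).card_rootsOfUnity

open Matrix in
lemma exists_PDQ {n : ℕ} (B : Matrix (Fin n) (Fin n) ℤ) (hB : B.det ≠ 0) :
    ∃ (P Q : Matrix (Fin n) (Fin n) ℤ) (a : Fin n → ℤ),
      B = P * Matrix.diagonal a * Q ∧ IsUnit P.det ∧ IsUnit Q.det := by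
  classical
  set std : Module.Basis (Fin n) ℤ (Fin n → ℤ) := Pi.basisFun ℤ (Fin n) with hstd
  set ℓ : (Fin n → ℤ) →ₗ[ℤ] (Fin n → ℤ) := Matrix.toLin' B with hℓ
  have hinj : Function.Injective ℓ := by
    intro v w hvw
    have h1 : B.adjugate.mulVec (B.mulVec v) = B.adjugate.mulVec (B.mulVec w) := by
      simp only [hℓ, Matrix.toLin'_apply] at hvw
      rw [hvw]
    rw [Matrix.mulVec_mulVec, Matrix.mulVec_mulVec, Matrix.adjugate_mul,
      Matrix.smul_mulVec, Matrix.smul_mulVec, Matrix.one_mulVec,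
      Matrix.one_mulVec] at h1
    exact smul_right_injective _ hB h1
  set N : Submodule ℤ (Fin n → ℤ) := LinearMap.range ℓ with hN
  obtain ⟨m, snf⟩ := Submodule.smithNormalForm std N
  set e0 : (Fin n → ℤ) ≃ₗ[ℤ] N := LinearEquiv.ofInjective ℓ hinj with he0
  have hmn : m = n := Fin.equiv_iff_eq.mp ⟨snf.bN.indexEquiv (std.map e0)⟩
  subst hmn
  set bC : Module.Basis (Fin m) ℤ N := std.map e0 with hbC
  have hfbij : Function.Bijective snf.f := Finite.injective_iff_bijective.mp snf.f.injective
  set σ : Fin m ≃ Fin m := Equiv.ofBijective snf.f hfbij with hσ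
  set bP : Module.Basis (Fin m) ℤ (Fin m → ℤ) := snf.bM.reindex σ.symm with hbP
  set P := std.toMatrix bP with hP
  set Q := snf.bN.toMatrix bC with hQ
  refine ⟨P, Q, snf.a, ?_, ?_, ?_⟩
  · have hdecomp : ℓ = N.subtype ∘ₗ (e0 : (Fin m → ℤ) →ₗ[ℤ] N) := by
      ext v k
      exact (congrFun (LinearEquiv.ofInjective_apply (f := ℓ) (h := hinj) (Pi.single v 1)) k).symm
    have hB' : B = LinearMap.toMatrix std std ℓ := by
      rw [hℓ, ← Matrix.toLin_eq_toLin', LinearMap.toMatrix_toLin]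
    have hQ' : LinearMap.toMatrix std snf.bN (e0 : (Fin m → ℤ) →ₗ[ℤ] N) = Q := by
      ext i j
      rw [LinearMap.toMatrix_apply, hQ, Module.Basis.toMatrix_apply, hbC, Module.Basis.map_apply]
      rfl
    have hPD : LinearMap.toMatrix snf.bN std N.subtype = P * Matrix.diagonal snf.a := by
      ext k j
      rw [LinearMap.toMatrix_apply, Matrix.mul_diagonal, hP, Module.Basis.toMatrix_apply]
      have h1 : (N.subtype (snf.bN j)) = snf.a j • snf.bM (snf.f j) := snf.snf j
      rw [h1]
      have h2 : bP j = snf.bM (snf.f j) := by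
        rw [hbP, Module.Basis.reindex_apply, Equiv.symm_symm]
        rfl
      rw [h2]
      simp [hstd, mul_comm]
    rw [hB', hdecomp, LinearMap.toMatrix_comp std snf.bN std, hQ', hPD]
  · letI := std.invertibleToMatrix bP
    exact (Matrix.isUnit_iff_isUnit_det _).mp (isUnit_of_invertible P)
  · letI := snf.bN.invertibleToMatrix bC
    exact (Matrix.isUnit_iff_isUnit_det _).mp (isUnit_of_invertible Q)

lemma card_preimage_hom {G H : Type*} [CommGroup G] [CommGroup H] (φ : G →* H)
    (hs : Function.Surjective φ) (S : Set H) :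
    Nat.card {x : G // φ x ∈ S} = Nat.card {g : G // φ g = 1} * Nat.card S := by
  rw [← Nat.card_prod]
  refine (Nat.card_congr (Equiv.ofBijective
    (fun p : {g : G // φ g = 1} × S => (⟨p.1.1 * Function.surjInv hs p.2.1, ?_⟩ :
      {x : G // φ x ∈ S})) ⟨?_, ?_⟩)).symm
  · rw [map_mul, p.1.2, one_mul, Function.surjInv_eq hs]
    exact p.2.2
  · rintro ⟨⟨k, hk⟩, ⟨y, hy⟩⟩ ⟨⟨k', hk'⟩, ⟨y', hy'⟩⟩ h
    have h0 : k * Function.surjInv hs y = k' * Function.surjInv hs y' :=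
      congrArg Subtype.val h
    have h1 : y = y' := by
      have := congrArg φ h0
      rwa [map_mul, map_mul, hk, hk', one_mul, one_mul,
        Function.surjInv_eq hs, Function.surjInv_eq hs] at this
    subst h1
    have h2 : k = k' := mul_right_cancel h0
    simp [h2]
  · rintro ⟨x, hx⟩
    refine ⟨⟨⟨x * (Function.surjInv hs (φ x))⁻¹, ?_⟩, ⟨φ x, hx⟩⟩, ?_⟩
    · rw [map_mul, map_inv, Function.surjInv_eq hs, mul_inv_cancel]
    · ext
      simp

theorem lacunary_solution_count {n : ℕ} (B : Matrix (Fin n) (Fin n) ℤ) (hB : B.det ≠ 0)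
    (F G : (Fin n → ℂˣ) → Fin n → ℂ) (hFG : ∀ x, F x = G (monomialMap B x))
    (hfin : {y : Fin n → ℂˣ | G y = 0}.Finite) :
    Nat.card {x : Fin n → ℂˣ // F x = 0} =
      B.det.natAbs * Nat.card {y : Fin n → ℂˣ // G y = 0} := by
  classical
  obtain ⟨P, Q, a, hBPQ, hPu, hQu⟩ := exists_PDQ B hB
  obtain ⟨P', hPP', hP'P⟩ : ∃ P', P * P' = 1 ∧ P' * P = 1 := by
    letI := P.invertibleOfIsUnitDet hPu
    exact ⟨⅟P, mul_invOf_self P, invOf_mul_self P⟩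
  obtain ⟨Q', hQQ', hQ'Q⟩ : ∃ Q', Q * Q' = 1 ∧ Q' * Q = 1 := by
    letI := Q.invertibleOfIsUnitDet hQu
    exact ⟨⅟Q, mul_invOf_self Q, invOf_mul_self Q⟩
  -- determinant bookkeeping
  have hdetB : B.det = P.det * (∏ i, a i) * Q.det := by
    rw [hBPQ, Matrix.det_mul, Matrix.det_mul, Matrix.det_diagonal]
  have hprodne : (∏ i, a i) ≠ 0 := by
    intro h
    rw [hdetB, h] at hB
    simp at hB
  have ha : ∀ i, a i ≠ 0 := by
    intro i hi
    exact hprodne (Finset.prod_eq_zero (Finset.mem_univ i) hi)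
  have hPdet1 : P.det.natAbs = 1 := by
    rcases Int.isUnit_iff.mp hPu with h | h <;> rw [h] <;> rfl
  have hQdet1 : Q.det.natAbs = 1 := by
    rcases Int.isUnit_iff.mp hQu with h | h <;> rw [h] <;> rfl
  have hdet : (∏ i, (a i).natAbs) = B.det.natAbs := by
    rw [hdetB, Int.natAbs_mul, Int.natAbs_mul, hPdet1, hQdet1, one_mul, mul_one]
    exact (map_prod Int.natAbsHom a Finset.univ).symm
  -- decomposition of the monomial map
  have hcomp : ∀ x, monomialMap B x =
      monomialMap P (monomialMap (Matrix.diagonal a) (monomialMap Q x)) := by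
    intro x
    rw [hBPQ, monomialMap_mul, monomialMap_mul]
  have hbijP : Function.Bijective (monomialMap P) := by
    refine Function.bijective_iff_has_inverse.mpr ⟨monomialMap P', ?_, ?_⟩
    · intro x; rw [← monomialMap_mul, hP'P, monomialMap_one]
    · intro x; rw [← monomialMap_mul, hPP', monomialMap_one]
  have hbijQ : Function.Bijective (monomialMap Q) := by
    refine Function.bijective_iff_has_inverse.mpr ⟨monomialMap Q', ?_, ?_⟩
    · intro x; rw [← monomialMap_mul, hQ'Q, monomialMap_one]
    · intro x; rw [← monomialMap_mul, hQQ', monomialMap_one]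
  have hsurjD : Function.Surjective (monomialMap (Matrix.diagonal a)) := by
    intro y
    choose z hz using fun i => zpow_surj_units (a i) (ha i) (y i)
    refine ⟨z, funext fun i => ?_⟩
    rw [monomialMap_diagonal]
    exact hz i
  have hsurjB : Function.Surjective (monomialMap B) := by
    have : monomialMap B =
        (monomialMap P) ∘ (monomialMap (Matrix.diagonal a)) ∘ (monomialMap Q) :=
      funext hcomp
    rw [this]
    exact hbijP.surjective.comp (hsurjD.comp hbijQ.surjective)
  -- kernel cardinality
  have hker_iff : ∀ x, monomialMap B x = 1 ↔
      monomialMap (Matrix.diagonal a) (monomialMap Q x) = 1 := by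
    intro x
    rw [hcomp x]
    constructor
    · intro h
      have h1 : monomialMap P (monomialMap (Matrix.diagonal a) (monomialMap Q x))
          = monomialMap P 1 := by
        rw [h]
        funext i
        simp [monomialMap]
      exact hbijP.injective h1
    · intro h
      rw [h]
      funext i
      simp [monomialMap]
  have hkercard : Nat.card {g : Fin n → ℂˣ // monomialMap B g = 1} = B.det.natAbs := by
    have e1 : {g : Fin n → ℂˣ // monomialMap B g = 1} ≃
        {y : Fin n → ℂˣ // monomialMap (Matrix.diagonal a) y = 1} := by
      refine Equiv.subtypeEquiv (Equiv.ofBijective (monomialMap Q) hbijQ) fun x => ?_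
      exact hker_iff x
    have e2 : {y : Fin n → ℂˣ // monomialMap (Matrix.diagonal a) y = 1} ≃
        ∀ i, {z : ℂˣ // z ^ a i = 1} := by
      refine (Equiv.subtypeEquivRight fun y => ?_).trans (Equiv.subtypePiEquivPi)
      constructor
      · intro h i
        rw [← monomialMap_diagonal a y i, h, Pi.one_apply]
      · intro h
        funext i
        rw [monomialMap_diagonal a y i, h i, Pi.one_apply]
    rw [Nat.card_congr (e1.trans e2), Nat.card_pi, ← hdet]
    exact Finset.prod_congr rfl fun i _ => card_zpow_ker (a i) (ha i)
  -- put everything together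
  set φ : (Fin n → ℂˣ) →* (Fin n → ℂˣ) :=
    MonoidHom.mk' (monomialMap B) (monomialMap_mapmul B) with hφ
  have key := card_preimage_hom φ hsurjB {y : Fin n → ℂˣ | G y = 0}
  have hre : Nat.card {x : Fin n → ℂˣ // F x = 0} =
      Nat.card {x : Fin n → ℂˣ // φ x ∈ {y : Fin n → ℂˣ | G y = 0}} := by
    refine Nat.card_congr (Equiv.subtypeEquivRight fun x => ?_)
    rw [hFG x]
    rfl
  rw [hre, key]
  rw [show Nat.card { g : Fin n → ℂˣ // φ g = 1 } = B.det.natAbs from hkercard]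
  rfl
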